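/- Prim/Kruskal-type greedy optimality: in a complete weighted graph on a finite vertex set with positive edge costs, the spanning tree produced by repeatedly merging the two clusters joined by the cheapest inter-cluster edge (starting from singleton clusters) has total cost equal to the minimum total cost over all connected spanning subgraphs. -/
import Mathlib

open Finset

section auxGreedy
set_option linter.unusedSectionVars false
set_option linter.unusedVariables false
variable {B : Type*} [DecidableEq B]

private lemma sym2_cases' (e : Sym2 B) : ∃ a b : B, e = s(a, b) :=
  Sym2.ind (fun a b => ⟨a, b, rfl⟩) e

private noncomputable def crossF (P : Finset (Finset B)) (E : Finset (Sym2 B)) :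
    Finset (Sym2 B) :=
  @Finset.filter _ (fun e => ¬ ∃ W ∈ P, ∀ x ∈ e, x ∈ W) (Classical.decPred _) E

private lemma mem_crossF {P : Finset (Finset B)} {E : Finset (Sym2 B)} {e : Sym2 B} :
    e ∈ crossF P E ↔ e ∈ E ∧ ¬ ∃ W ∈ P, ∀ x ∈ e, x ∈ W := by
  unfold crossF
  exact @Finset.mem_filter _ _ (Classical.decPred _) _ _

private lemma merge_cov (P : Finset (Finset B)) (hcov : ∀ b : B, ∃! W, W ∈ P ∧ b ∈ W)
    {Z Z' : Finset B} (hZ : Z ∈ P) (hZ' : Z' ∈ P) (hne : Z ≠ Z') :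
    ∀ b : B, ∃! W, W ∈ insert (Z ∪ Z') ((P.erase Z).erase Z') ∧ b ∈ W := by
  intro b
  obtain ⟨W, ⟨hWP, hbW⟩, huniq⟩ := hcov b
  by_cases hcase : W = Z ∨ W = Z'
  · refine ⟨Z ∪ Z', ⟨mem_insert_self _ _, ?_⟩, ?_⟩
    · rcases hcase with rfl | rfl
      · exact mem_union_left _ hbW
      · exact mem_union_right _ hbW
    · rintro V ⟨hV, hbV⟩
      rcases mem_insert.mp hV with rfl | hV'
      · rfl
      · have h1 := mem_erase.mp hV'
        have hVZ' := h1.1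
        have hVZ := (mem_erase.mp h1.2).1
        have hVP := (mem_erase.mp h1.2).2
        have := huniq V ⟨hVP, hbV⟩
        subst this
        rcases hcase with rfl | rfl
        · exact absurd rfl hVZ
        · exact absurd rfl hVZ'
  · push_neg at hcase
    refine ⟨W, ⟨mem_insert_of_mem (mem_erase.mpr ⟨hcase.2, mem_erase.mpr ⟨hcase.1, hWP⟩⟩), hbW⟩, ?_⟩
    rintro V ⟨hV, hbV⟩
    rcases mem_insert.mp hV with rfl | hV'
    · rcases mem_union.mp hbV with h | h
      · exact absurd (huniq Z ⟨hZ, h⟩).symm hcase.1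
      · exact absurd (huniq Z' ⟨hZ', h⟩).symm hcase.2
    · exact huniq V ⟨(mem_erase.mp (mem_erase.mp hV').2).2, hbV⟩

private lemma merge_not_mem (P : Finset (Finset B)) (hcov : ∀ b : B, ∃! W, W ∈ P ∧ b ∈ W)
    {Z Z' : Finset B} (hZ : Z ∈ P) (hne : Z ≠ Z') {a : B} (haZ : a ∈ Z) :
    Z ∪ Z' ∉ (P.erase Z).erase Z' := by
  intro h
  have h1 := mem_erase.mp h
  have hne1 := (mem_erase.mp h1.2).1
  have hP := (mem_erase.mp h1.2).2
  obtain ⟨W, _, huniq⟩ := hcov a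
  have e1 := huniq Z ⟨hZ, haZ⟩
  have e2 := huniq (Z ∪ Z') ⟨hP, mem_union_left _ haZ⟩
  exact hne1 (e2.trans e1.symm)

private lemma merge_card (P : Finset (Finset B)) (hcov : ∀ b : B, ∃! W, W ∈ P ∧ b ∈ W)
    {Z Z' : Finset B} (hZ : Z ∈ P) (hZ' : Z' ∈ P) (hne : Z ≠ Z') {a : B} (haZ : a ∈ Z) :
    (insert (Z ∪ Z') ((P.erase Z).erase Z')).card = P.card - 1 := by
  have h2 : (2 : ℕ) ≤ P.card := Finset.one_lt_card.mpr ⟨Z, hZ, Z', hZ', hne⟩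
  rw [card_insert_of_notMem (merge_not_mem P hcov hZ hne haZ),
    card_erase_of_mem (mem_erase.mpr ⟨hne.symm, hZ'⟩), card_erase_of_mem hZ]
  omega

private lemma merge_coarsen (P : Finset (Finset B)) {Z Z' : Finset B}
    (hZ : Z ∈ P) (hZ' : Z' ∈ P) :
    ∀ W ∈ P, ∃ V ∈ insert (Z ∪ Z') ((P.erase Z).erase Z'), W ⊆ V := by
  intro W hW
  by_cases h1 : W = Z
  · exact ⟨Z ∪ Z', mem_insert_self _ _, h1 ▸ subset_union_left⟩
  by_cases h2 : W = Z'
  · exact ⟨Z ∪ Z', mem_insert_self _ _, h2 ▸ subset_union_right⟩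
  · exact ⟨W, mem_insert_of_mem (mem_erase.mpr ⟨h2, mem_erase.mpr ⟨h1, hW⟩⟩), subset_rfl⟩

private lemma merge_nonempty (P : Finset (Finset B)) (hne : ∀ W ∈ P, W.Nonempty)
    {Z Z' : Finset B} (hZ : Z ∈ P) :
    ∀ W ∈ insert (Z ∪ Z') ((P.erase Z).erase Z'), W.Nonempty := by
  intro W hW
  rcases mem_insert.mp hW with rfl | hW'
  · exact (hne Z hZ).mono subset_union_left
  · exact hne W (mem_erase.mp (mem_erase.mp hW').2).2

private lemma walk_cross {G : SimpleGraph B} (P : Finset (Finset B))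
    (hcov : ∀ x : B, ∃! W, W ∈ P ∧ x ∈ W) :
    ∀ {a b : B}, G.Walk a b → (¬ ∃ W ∈ P, a ∈ W ∧ b ∈ W) →
      ∃ x y, G.Adj x y ∧ ¬ ∃ W ∈ P, x ∈ W ∧ y ∈ W := by
  intro a b w
  induction w with
  | nil =>
    intro hab
    obtain ⟨W, ⟨hW, haW⟩, _⟩ := hcov _
    exact absurd ⟨W, hW, haW, haW⟩ hab
  | @cons u v c h p ih =>
    intro hab
    by_cases huv : ∃ W ∈ P, u ∈ W ∧ v ∈ W
    · refine ih ?_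
      rintro ⟨W, hW, hvW, hcW⟩
      obtain ⟨W', hW', huW', hvW'⟩ := huv
      obtain ⟨W0, _, huniq⟩ := hcov v
      have := (huniq W ⟨hW, hvW⟩).trans (huniq W' ⟨hW', hvW'⟩).symm
      subst this
      exact hab ⟨W, hW, huW', hcW⟩
    · exact ⟨u, v, h, huv⟩

private lemma cross_card [Fintype B] (E : Finset (Sym2 B))
    (hconn : (SimpleGraph.fromEdgeSet (E : Set (Sym2 B))).Connected) :
    ∀ (k : ℕ) (P : Finset (Finset B)), P.card ≤ k →
      (∀ b : B, ∃! W, W ∈ P ∧ b ∈ W) → (∀ W ∈ P, W.Nonempty) →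
      P.card - 1 ≤ (crossF P E).card := by
  intro k
  induction k with
  | zero => intro P h _ _; omega
  | succ k ih =>
    intro P hPk hcov hnep
    by_cases h1 : P.card ≤ 1
    · omega
    · obtain ⟨W1, hW1, W2, hW2, hW12⟩ := Finset.one_lt_card.mp (lt_of_not_ge h1)
      obtain ⟨a, ha⟩ := hnep W1 hW1
      obtain ⟨b, hb⟩ := hnep W2 hW2
      have hab : ¬ ∃ W ∈ P, a ∈ W ∧ b ∈ W := by
        rintro ⟨W, hW, haW, hbW⟩
        obtain ⟨Wa, _, hu1⟩ := hcov a
        have e1 := (hu1 W ⟨hW, haW⟩).trans (hu1 W1 ⟨hW1, ha⟩).symm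
        obtain ⟨Wb, _, hu2⟩ := hcov b
        have e2 := (hu2 W ⟨hW, hbW⟩).trans (hu2 W2 ⟨hW2, hb⟩).symm
        exact hW12 (e1.symm.trans e2)
      obtain ⟨wab⟩ := hconn.preconnected a b
      obtain ⟨x, y, hxy, hxyc⟩ := walk_cross P hcov wab hab
      obtain ⟨Wx, ⟨hWxP, hxWx⟩, _⟩ := hcov x
      obtain ⟨Wy, ⟨hWyP, hyWy⟩, _⟩ := hcov y
      have hWxy : Wx ≠ Wy := fun h => hxyc ⟨Wx, hWxP, hxWx, h ▸ hyWy⟩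
      set P' := insert (Wx ∪ Wy) ((P.erase Wx).erase Wy) with hP'
      have hcov' := merge_cov P hcov hWxP hWyP hWxy
      have hcard' : P'.card = P.card - 1 := merge_card P hcov hWxP hWyP hWxy hxWx
      have hnep' := merge_nonempty P hnep hWxP (Z' := Wy)
      have hexy : s(x, y) ∈ E := by
        have := (SimpleGraph.fromEdgeSet_adj _).mp hxy
        exact Finset.mem_coe.mp this.1
      have hmemP : s(x, y) ∈ crossF P E := by
        refine mem_crossF.mpr ⟨hexy, ?_⟩
        rintro ⟨W, hW, hall⟩
        exact hxyc ⟨W, hW, hall x (Sym2.mem_mk_left x y), hall y (Sym2.mem_mk_right x y)⟩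
      have hnotm : s(x, y) ∉ crossF P' E := by
        intro h
        exact (mem_crossF.mp h).2
          ⟨Wx ∪ Wy, mem_insert_self _ _, by
            intro z hz
            rcases Sym2.mem_iff.mp hz with rfl | rfl
            · exact mem_union_left _ hxWx
            · exact mem_union_right _ hyWy⟩
      have hsub : insert s(x, y) (crossF P' E) ⊆ crossF P E := by
        intro e he
        rcases mem_insert.mp he with rfl | he'
        · exact hmemP
        · obtain ⟨heE, hcr⟩ := mem_crossF.mp he'
          refine mem_crossF.mpr ⟨heE, ?_⟩
          rintro ⟨W, hW, hall⟩
          obtain ⟨V, hV, hWV⟩ := merge_coarsen P hWxP hWyP W hW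
          exact hcr ⟨V, hV, fun z hz => hWV (hall z hz)⟩
      have hih := ih P' (by omega) hcov' hnep'
      have hcle := Finset.card_le_card hsub
      rw [Finset.card_insert_of_notMem hnotm] at hcle
      omega



end auxGreedy

/-- Greedy clustering (Prim/Kruskal-type) optimality: the spanning tree obtained by
repeatedly adding the globally cheapest inter-cluster edge and merging the two
clusters has total cost equal to the minimum cost over all connected spanning
plannings (edge subsets of the complete graph). -/
theorem stmt3 {B : Type*} [Fintype B] [DecidableEq B] (hB : 2 ≤ Fintype.card B)
    (π : B → B → ℝ) (hsymm : ∀ a b, π a b = π b a) (hpos : ∀ a b, 0 < π a b)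
    -- a run of the greedy clustering algorithm:
    (n : ℕ) (parts : Fin (n + 1) → Finset (Finset B)) (edge : Fin n → B × B)
    (hinit : parts 0 = Finset.univ.image (fun b => ({b} : Finset B)))
    (hlast : parts (Fin.last n) = {Finset.univ})
    (hstep : ∀ t : Fin n, ∃ Z Z' : Finset B,
      Z ∈ parts t.castSucc ∧ Z' ∈ parts t.castSucc ∧ Z ≠ Z' ∧
      (edge t).1 ∈ Z ∧ (edge t).2 ∈ Z' ∧
      -- the chosen edge is the globally cheapest inter-cluster edge
      (∀ W W' : Finset B, W ∈ parts t.castSucc → W' ∈ parts t.castSucc → W ≠ W' →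
        ∀ b ∈ W, ∀ b' ∈ W', π (edge t).1 (edge t).2 ≤ π b b') ∧
      parts t.succ = insert (Z ∪ Z') (((parts t.castSucc).erase Z).erase Z')) :
    IsLeast
      {c : ℝ | ∃ E : Finset (Sym2 B), (∀ e ∈ E, ¬ e.IsDiag) ∧
        (SimpleGraph.fromEdgeSet (E : Set (Sym2 B))).Connected ∧
        c = ∑ e ∈ E, Sym2.lift ⟨π, fun a b => hsymm a b⟩ e}
      (∑ t : Fin n, π (edge t).1 (edge t).2) := by
  classical
  set w : Sym2 B → ℝ := Sym2.lift ⟨π, fun a b => hsymm a b⟩ with hw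
  have hwmk : ∀ a b : B, w s(a, b) = π a b := fun a b => Sym2.lift_mk _ a b
  have hw0 : ∀ e : Sym2 B, 0 ≤ w e := by
    intro e
    obtain ⟨a, b, rfl⟩ := sym2_cases' e
    rw [hwmk]; exact (hpos a b).le
  set Eg : Finset (Sym2 B) :=
    Finset.image (fun t : Fin n => s((edge t).1, (edge t).2)) Finset.univ with hEg
  -- the master invariant
  have inv : ∀ t : Fin (n + 1),
      (∀ b : B, ∃! W, W ∈ parts t ∧ b ∈ W) ∧
      (parts t).card = Fintype.card B - t.val ∧
      (∀ W ∈ parts t, W.Nonempty) ∧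
      (∀ W ∈ parts t, ∀ a ∈ W, ∀ b ∈ W,
        (SimpleGraph.fromEdgeSet (Eg : Set (Sym2 B))).Reachable a b) := by
    intro t
    induction t using Fin.induction with
    | zero =>
      rw [hinit]
      refine ⟨?_, ?_, ?_, ?_⟩
      · intro b
        refine ⟨{b}, ⟨mem_image.mpr ⟨b, mem_univ b, rfl⟩, mem_singleton_self b⟩, ?_⟩
        rintro W ⟨hW, hbW⟩
        obtain ⟨c, -, rfl⟩ := mem_image.mp hW
        rw [mem_singleton] at hbW
        rw [hbW]
      · rw [Finset.card_image_of_injective _ (fun a b h => by simpa using h)]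
        simp
      · intro W hW
        obtain ⟨c, -, rfl⟩ := mem_image.mp hW
        exact singleton_nonempty c
      · intro W hW a ha b hb
        obtain ⟨c, -, rfl⟩ := mem_image.mp hW
        rw [mem_singleton] at ha hb
        rw [ha, hb]
    | succ t ih =>
      obtain ⟨Z, Z', hZ, hZ', hne, he1, he2, hmin, hP⟩ := hstep t
      obtain ⟨cov, cardp, nep, reach⟩ := ih
      have hne12 : (edge t).1 ≠ (edge t).2 := by
        intro h
        obtain ⟨W, -, huniq⟩ := cov (edge t).1
        exact hne ((huniq Z ⟨hZ, he1⟩).trans (huniq Z' ⟨hZ', h ▸ he2⟩).symm)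
      rw [hP]
      refine ⟨merge_cov _ cov hZ hZ' hne, ?_, merge_nonempty _ nep hZ, ?_⟩
      · rw [merge_card _ cov hZ hZ' hne he1, cardp, Fin.val_succ, Fin.coe_castSucc]
        omega
      · have hadj : (SimpleGraph.fromEdgeSet (Eg : Set (Sym2 B))).Adj (edge t).1 (edge t).2 := by
          rw [SimpleGraph.fromEdgeSet_adj]
          exact ⟨mem_coe.mpr (mem_image.mpr ⟨t, mem_univ t, rfl⟩), hne12⟩
        have key : ∀ x ∈ Z, ∀ y ∈ Z', (SimpleGraph.fromEdgeSet (Eg : Set (Sym2 B))).Reachable x y :=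
          fun x hx y hy => ((reach Z hZ x hx _ he1).trans hadj.reachable).trans
            (reach Z' hZ' _ he2 y hy)
        intro W hW a ha b hb
        rcases mem_insert.mp hW with rfl | hW'
        · rcases mem_union.mp ha with ha' | ha' <;> rcases mem_union.mp hb with hb' | hb'
          · exact reach Z hZ a ha' b hb'
          · exact key a ha' b hb'
          · exact (key b hb' a ha').symm
          · exact reach Z' hZ' a ha' b hb'
        · exact reach W (mem_erase.mp (mem_erase.mp hW').2).2 a ha b hb
  have cardB : Fintype.card B = n + 1 := by
    have h1 := (inv (Fin.last n)).2.1
    rw [hlast] at h1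
    simp only [card_singleton, Fin.val_last] at h1
    have h2 := (inv 0).2.1
    rw [hinit, Finset.card_image_of_injective _ (fun a b h => by simpa using h)] at h2
    simp only [card_univ, Fin.val_zero] at h2
    omega
  -- coarsening
  have coarsen : ∀ t s : Fin (n + 1), s ≤ t → ∀ W ∈ parts s, ∃ V ∈ parts t, W ⊆ V := by
    intro t
    induction t using Fin.induction with
    | zero =>
      intro s hs W hW
      have : s = 0 := le_antisymm hs (Fin.zero_le s)
      exact ⟨W, this ▸ hW, subset_rfl⟩
    | succ t ih =>
      intro s hs W hW
      by_cases hcase : s = t.succ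
      · exact ⟨W, hcase ▸ hW, subset_rfl⟩
      · have hs' : s ≤ t.castSucc := by
          rw [Fin.le_def] at hs ⊢
          rw [Fin.val_succ] at hs
          have h3 : s.val ≠ t.val + 1 := fun h => hcase (Fin.ext (by simpa using h))
          rw [Fin.coe_castSucc]
          omega
        obtain ⟨V, hV, hWV⟩ := ih s hs' W hW
        obtain ⟨Z, Z', hZ, hZ', hne, -, -, -, hP⟩ := hstep t
        rw [hP]
        obtain ⟨V', hV', hVV'⟩ := merge_coarsen _ hZ hZ' V hV
        exact ⟨V', hV', hWV.trans hVV'⟩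
  -- endpoints of earlier edges end up in a common part
  have same_part : ∀ (s : Fin n) (t : Fin (n + 1)), s.val + 1 ≤ t.val →
      ∃ W ∈ parts t, (edge s).1 ∈ W ∧ (edge s).2 ∈ W := by
    intro s t hst
    obtain ⟨Z, Z', hZ, hZ', hne, he1, he2, -, hP⟩ := hstep s
    have h1 : Z ∪ Z' ∈ parts s.succ := by rw [hP]; exact mem_insert_self _ _
    have hle : s.succ ≤ t := by rw [Fin.le_def, Fin.val_succ]; exact hst
    obtain ⟨V, hV, hsub⟩ := coarsen t s.succ hle _ h1
    exact ⟨V, hV, hsub (mem_union_left _ he1), hsub (mem_union_right _ he2)⟩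
  -- at their own time, the edge endpoints are in different parts
  have diff_part : ∀ t : Fin n, ¬ ∃ W ∈ parts t.castSucc, (edge t).1 ∈ W ∧ (edge t).2 ∈ W := by
    rintro t ⟨W, hW, h1, h2⟩
    obtain ⟨Z, Z', hZ, hZ', hne, he1, he2, -, -⟩ := hstep t
    obtain ⟨W1, -, hu1⟩ := (inv t.castSucc).1 (edge t).1
    obtain ⟨W2, -, hu2⟩ := (inv t.castSucc).1 (edge t).2
    have e1 := (hu1 Z ⟨hZ, he1⟩).trans (hu1 W ⟨hW, h1⟩).symm
    have e2 := (hu2 Z' ⟨hZ', he2⟩).trans (hu2 W ⟨hW, h2⟩).symm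
    exact hne (e1.trans e2.symm)
  have hne12 : ∀ t : Fin n, (edge t).1 ≠ (edge t).2 := by
    intro t h
    obtain ⟨W, ⟨hW, hmem⟩, -⟩ := (inv t.castSucc).1 (edge t).1
    exact diff_part t ⟨W, hW, hmem, h ▸ hmem⟩
  -- injectivity of greedy edges
  have hlt : ∀ s t : Fin n, s < t →
      s((edge s).1, (edge s).2) ≠ s((edge t).1, (edge t).2) := by
    intro s t hst heq
    obtain ⟨W, hW, hw1, hw2⟩ := same_part s t.castSucc (by
      rw [Fin.coe_castSucc]; exact hst)
    rcases Sym2.eq_iff.mp heq with ⟨h1, h2⟩ | ⟨h1, h2⟩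
    · exact diff_part t ⟨W, hW, h1 ▸ hw1, h2 ▸ hw2⟩
    · exact diff_part t ⟨W, hW, h2 ▸ hw2, h1 ▸ hw1⟩
  have hinj : Function.Injective (fun t : Fin n => s((edge t).1, (edge t).2)) := by
    intro s t h
    rcases lt_trichotomy s t with hc | hc | hc
    · exact absurd h (hlt s t hc)
    · exact hc
    · exact absurd h.symm (hlt t s hc)
  constructor
  · -- membership : the greedy edge set realizes the cost
    refine ⟨Eg, ?_, ?_, ?_⟩
    · intro e he
      obtain ⟨t, -, rfl⟩ := mem_image.mp he
      rw [Sym2.mk_isDiag_iff]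
      exact hne12 t
    · have hBne : Nonempty B := by
        have : 0 < Fintype.card B := by omega
        exact Fintype.card_pos_iff.mp this
      refine ⟨fun a b => ?_⟩
      have huniv : (Finset.univ : Finset B) ∈ parts (Fin.last n) := by
        rw [hlast]; exact mem_singleton_self _
      exact (inv (Fin.last n)).2.2.2 _ huniv a (mem_univ a) b (mem_univ b)
    · rw [hEg, Finset.sum_image (fun s _ t _ h => hinj h)]
      exact (Finset.sum_congr rfl (fun t _ => (hwmk _ _).symm))
  · -- lower bound
    rintro c ⟨E, hnd, hconn, rfl⟩
    -- Hall: a system of distinct representatives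
    have hall : ∃ g : Fin n → Sym2 B, Function.Injective g ∧
        ∀ t, g t ∈ crossF (parts t.castSucc) E := by
      apply (Finset.all_card_le_biUnion_card_iff_exists_injective
        (fun t : Fin n => crossF (parts t.castSucc) E)).mp
      intro S
      rcases S.eq_empty_or_nonempty with rfl | hSne
      · simp
      · set m := S.min' hSne with hm
        have hmS : m ∈ S := S.min'_mem hSne
        have hsub1 : crossF (parts m.castSucc) E ⊆ S.biUnion
            (fun t : Fin n => crossF (parts t.castSucc) E) :=
          Finset.subset_biUnion_of_mem (fun t : Fin n => crossF (parts t.castSucc) E) hmS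
        have h1 : (parts m.castSucc).card - 1 ≤ (crossF (parts m.castSucc) E).card :=
          cross_card E hconn (parts m.castSucc).card _ le_rfl
            (inv m.castSucc).1 (inv m.castSucc).2.2.1
        have h2 : (parts m.castSucc).card = Fintype.card B - m.val := (inv m.castSucc).2.1
        have hSIci : S ⊆ Finset.Ici m := fun x hx => Finset.mem_Ici.mpr (S.min'_le x hx)
        have hScard : S.card ≤ n - m.val := by
          have := Finset.card_le_card hSIci
          rwa [Fin.card_Ici] at this
        have hml : m.val < n := m.isLt
        have := Finset.card_le_card hsub1
        omega
    obtain ⟨g, hginj, hgmem⟩ := hall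
    have hgE : ∀ t, g t ∈ E := fun t => (mem_crossF.mp (hgmem t)).1
    have hge : ∀ t : Fin n, π (edge t).1 (edge t).2 ≤ w (g t) := by
      intro t
      obtain ⟨a, b, hab⟩ := sym2_cases' (g t)
      obtain ⟨-, hcr⟩ := mem_crossF.mp (hgmem t)
      rw [hab] at hcr
      obtain ⟨Z, Z', hZ, hZ', hne, he1, he2, hmin, -⟩ := hstep t
      obtain ⟨Wa, ⟨hWa, haWa⟩, -⟩ := (inv t.castSucc).1 a
      obtain ⟨Wb, ⟨hWb, hbWb⟩, -⟩ := (inv t.castSucc).1 b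
      have hWab : Wa ≠ Wb := by
        rintro rfl
        exact hcr ⟨Wa, hWa, fun z hz => by
          rcases Sym2.mem_iff.mp hz with rfl | rfl
          · exact haWa
          · exact hbWb⟩
      rw [hab, hwmk]
      exact hmin Wa Wb hWa hWb hWab a haWa b hbWb
    calc ∑ t : Fin n, π (edge t).1 (edge t).2
        ≤ ∑ t : Fin n, w (g t) := Finset.sum_le_sum (fun t _ => hge t)
      _ = ∑ e ∈ Finset.image g Finset.univ, w e :=
          (Finset.sum_image (fun s _ t _ h => hginj h)).symm
      _ ≤ ∑ e ∈ E, w e := by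
          apply Finset.sum_le_sum_of_subset_of_nonneg
          · intro e he
            obtain ⟨t, -, rfl⟩ := mem_image.mp he
            exact hgE t
          · intro e _ _
            exact hw0 e
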